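/- For every natural number n, the following identity holds (Strehl's identity for the Apéry numbers): ∑_{k=0}^{n} C(n,k) · C(n+k,k) · (∑_{j=0}^{k} C(k,j)^3) = ∑_{k=0}^{n} C(n,k)^2 · C(n+k,k)^2. -/

import Mathlib

open Finset

lemma vand (a b c : ℕ) :
    ∑ x ∈ range (c + 1), a.choose x * b.choose (c - x) = (a + b).choose c := by
  rw [Nat.add_choose_eq, Finset.Nat.sum_antidiagonal_eq_sum_range_succ_mk]

lemma trinom {s k : ℕ} (n : ℕ) (hsk : s ≤ k) :
    n.choose k * k.choose s = n.choose s * (n - s).choose (k - s) := by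
  rcases le_or_gt k n with h | h
  · exact Nat.choose_mul hsk
  · rcases le_or_gt s n with h2 | h2
    · rw [Nat.choose_eq_zero_of_lt h, Nat.choose_eq_zero_of_lt (show n - s < k - s by omega),
        zero_mul, mul_zero]
    · rw [Nat.choose_eq_zero_of_lt h2, Nat.choose_eq_zero_of_lt (by omega), zero_mul, zero_mul]

lemma tri {M : Type*} [AddCommMonoid M] (n : ℕ) (f : ℕ → ℕ → M) :
    ∑ k ∈ range (n + 1), ∑ j ∈ range (k + 1), f k j
      = ∑ j ∈ range (n + 1), ∑ k ∈ Ico j (n + 1), f k j := by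
  have h := Finset.sum_Ico_Ico_comm 0 (n + 1) (fun j k => f k j)
  simp only [Finset.range_eq_Ico]
  rw [← h]

lemma antitri {M : Type*} [AddCommMonoid M] (n : ℕ) (f : ℕ → ℕ → M) :
    ∑ j ∈ range (n + 1), ∑ s ∈ range (n - j + 1), f j s
      = ∑ s ∈ range (n + 1), ∑ j ∈ range (n - s + 1), f j s := by
  rw [Finset.sum_sigma', Finset.sum_sigma']
  refine sum_nbij' (fun x => ⟨x.2, x.1⟩) (fun x => ⟨x.2, x.1⟩) ?_ ?_ (fun _ _ => rfl)
    (fun _ _ => rfl) (fun _ _ => rfl) <;>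
  · simp only [Finset.mem_sigma, Finset.mem_range, Sigma.forall]
    omega

lemma suranyi (m q p : ℕ) :
    ∑ i ∈ range (m + 1), m.choose i * q.choose i * (p + i).choose (m + q)
      = p.choose m * p.choose q := by
  have step1 : ∑ i ∈ range (m + 1), m.choose i * q.choose i * (p + i).choose (m + q)
      = ∑ i ∈ range (m + 1), ∑ x ∈ range (i + 1),
          q.choose x * p.choose (m + q - x) * (m.choose i * (q - x).choose (i - x)) := by
    refine Finset.sum_congr rfl fun i hi => ?_
    rw [mem_range] at hi
    rw [show (p + i) = i + p from add_comm p i, ← vand i p (m + q), Finset.mul_sum]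
    rw [← Finset.sum_subset (Finset.range_subset_range.2 (show i + 1 ≤ m + q + 1 by omega))
      (fun x _ hx => by
        rw [mem_range, not_lt] at hx
        have h0 : i.choose x = 0 := Nat.choose_eq_zero_of_lt (by omega)
        rw [h0, zero_mul, mul_zero])]
    refine Finset.sum_congr rfl fun x hx => ?_
    rw [mem_range] at hx
    have h := trinom (s := x) (k := i) q (by omega)
    rw [show m.choose i * q.choose i * (i.choose x * p.choose (m + q - x))
        = q.choose i * i.choose x * (m.choose i * p.choose (m + q - x)) from by ring, h]
    ring
  rw [step1, tri m]
  have step2 : ∀ x ∈ range (m + 1),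
      ∑ i ∈ Ico x (m + 1), q.choose x * p.choose (m + q - x) * (m.choose i * (q - x).choose (i - x))
        = p.choose q * (q.choose x * (p - q).choose (m - x)) := by
    intro x hx
    rw [mem_range] at hx
    rw [Finset.sum_Ico_eq_sum_range, show m + 1 - x = (m - x) + 1 by omega]
    have inner : ∑ u ∈ range ((m - x) + 1),
        q.choose x * p.choose (m + q - x) * (m.choose (x + u) * (q - x).choose (x + u - x))
        = q.choose x * p.choose (m + q - x) * ((q - x) + m).choose (m - x) := by
      rw [← Finset.mul_sum]
      congr 1
      rw [← vand (q - x) m (m - x)]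
      refine Finset.sum_congr rfl fun u hu => ?_
      rw [mem_range] at hu
      rw [Nat.add_sub_cancel_left, mul_comm]
      congr 1
      rw [← Nat.choose_symm (show x + u ≤ m by omega)]
      congr 1
      omega
    rw [inner]
    by_cases hxq : x ≤ q
    · rw [show (q - x) + m = m + q - x by omega]
      rw [show m - x = (m + q - x) - q by omega, Nat.choose_symm (by omega)]
      have h2 := trinom (s := q) (k := m + q - x) p (by omega)
      rw [show q.choose x * p.choose (m + q - x) * (m + q - x).choose q
          = p.choose (m + q - x) * (m + q - x).choose q * q.choose x from by ring, h2]
      rw [show p - q = p - q from rfl]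
      have : m + q - x - q = m - x := by omega
      rw [this]
      ring
    · rw [Nat.choose_eq_zero_of_lt (show q < x by omega)]
      ring
  rw [Finset.sum_congr rfl step2, ← Finset.mul_sum, vand q (p - q) m]
  rcases le_or_gt q p with h | h
  · rw [show q + (p - q) = p by omega]
    ring
  · rw [Nat.choose_eq_zero_of_lt h]
    ring

lemma franel (k : ℕ) :
    ∑ j ∈ range (k + 1), k.choose j ^ 3
      = ∑ j ∈ range (k + 1), k.choose j ^ 2 * (2 * j).choose k := by
  have stepA : ∑ j ∈ range (k + 1), k.choose j ^ 3
      = ∑ j ∈ range (k + 1), ∑ s ∈ range (k - j + 1),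
          k.choose j ^ 2 * (j.choose s * (k - j).choose (k - j - s)) := by
    refine Finset.sum_congr rfl fun j hj => ?_
    rw [mem_range] at hj
    rw [← Finset.mul_sum, vand j (k - j) (k - j), show j + (k - j) = k by omega,
      Nat.choose_symm (show j ≤ k by omega)]
    ring
  rw [stepA, antitri k]
  have stepC : ∀ s ∈ range (k + 1),
      ∑ j ∈ range (k - s + 1), k.choose j ^ 2 * (j.choose s * (k - j).choose (k - j - s))
        = k.choose s ^ 2 * (2 * (k - s)).choose k := by
    intro s hs
    rw [mem_range] at hs
    rw [← Finset.sum_subset (show Ico s (k - s + 1) ⊆ range (k - s + 1) by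
        rw [Finset.range_eq_Ico]; exact Finset.Ico_subset_Ico (Nat.zero_le s) le_rfl)
      (fun j hj hj2 => by
        rw [mem_range] at hj
        rw [Finset.mem_Ico, not_and_or, not_le] at hj2
        have hjs : j < s := by omega
        have h0 : j.choose s = 0 := Nat.choose_eq_zero_of_lt hjs
        rw [h0, zero_mul, mul_zero])]
    have point : ∀ j ∈ Ico s (k - s + 1),
        k.choose j ^ 2 * (j.choose s * (k - j).choose (k - j - s))
          = k.choose s ^ 2 * ((k - s).choose (j - s) * (k - s).choose j) := by
      intro j hj
      rw [Finset.mem_Ico] at hj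
      obtain ⟨hsj, hjk⟩ := hj
      have h1 := trinom (s := s) (k := j) k hsj
      have h2 := trinom (s := j) (k := k - s) k (by omega)
      rw [show k - s - j = k - j - s by omega] at h2
      have h3 : k.choose (k - s) = k.choose s := Nat.choose_symm (by omega)
      rw [h3] at h2
      calc k.choose j ^ 2 * (j.choose s * (k - j).choose (k - j - s))
          = (k.choose j * j.choose s) * (k.choose j * (k - j).choose (k - j - s)) := by ring
        _ = (k.choose s * (k - s).choose (j - s)) * (k.choose s * (k - s).choose j) := by
            rw [h1, ← h2]
        _ = k.choose s ^ 2 * ((k - s).choose (j - s) * (k - s).choose j) := by ring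
    rw [Finset.sum_congr rfl point, Finset.sum_Ico_eq_sum_range]
    by_cases h2s : 2 * s ≤ k
    · rw [show k - s + 1 - s = (k - 2 * s) + 1 by omega, ← Finset.mul_sum]
      congr 1
      have hv : ∑ x ∈ range (k - 2 * s + 1), (k - s).choose x * (k - s).choose (k - 2 * s - x)
          = (2 * (k - s)).choose k := by
        rw [vand (k - s) (k - s) (k - 2 * s), show (k - s) + (k - s) = 2 * (k - s) by omega,
          show k - 2 * s = 2 * (k - s) - k by omega,
          Nat.choose_symm (show k ≤ 2 * (k - s) by omega)]
      rw [← hv]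
      refine Finset.sum_congr rfl fun u hu => ?_
      rw [mem_range] at hu
      rw [Nat.add_sub_cancel_left]
      congr 1
      rw [← Nat.choose_symm (show s + u ≤ k - s by omega)]
      congr 1
      omega
    · rw [show k - s + 1 - s = 0 by omega, Finset.range_zero, Finset.sum_empty,
        Nat.choose_eq_zero_of_lt (show 2 * (k - s) < k by omega), mul_zero]
  rw [Finset.sum_congr rfl stepC,
    ← Finset.sum_range_reflect (fun j => k.choose j ^ 2 * (2 * j).choose k) (k + 1)]
  refine Finset.sum_congr rfl fun s hs => ?_
  rw [mem_range] at hs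
  rw [show k + 1 - 1 - s = k - s by omega, ← Nat.choose_symm (show s ≤ k by omega)]

theorem strehl_apery_identity (n : ℕ) :
    ∑ k ∈ range (n + 1), n.choose k * (n + k).choose k * ∑ j ∈ range (k + 1), (k.choose j) ^ 3
      = ∑ k ∈ range (n + 1), (n.choose k) ^ 2 * ((n + k).choose k) ^ 2 := by
  have step1 : ∑ k ∈ range (n + 1), n.choose k * (n + k).choose k *
        ∑ j ∈ range (k + 1), (k.choose j) ^ 3
      = ∑ k ∈ range (n + 1), ∑ j ∈ range (k + 1),
          n.choose k * (n + k).choose k * (k.choose j ^ 2 * (2 * j).choose k) := by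
    refine Finset.sum_congr rfl fun k _ => ?_
    rw [franel k, Finset.mul_sum]
  rw [step1, tri n]
  refine Finset.sum_congr rfl fun j hj => ?_
  rw [mem_range] at hj
  have hjn : j ≤ n := by omega
  have point : ∀ k ∈ Ico j (n + 1),
      n.choose k * (n + k).choose k * (k.choose j ^ 2 * (2 * j).choose k)
        = n.choose j * (2 * j).choose j *
            ((n - j).choose (k - j) * (j.choose (k - j) * (n + k).choose n)) := by
    intro k hk
    rw [Finset.mem_Ico] at hk
    obtain ⟨hjk, hkn⟩ := hk
    have h1 := trinom (s := j) (k := k) n hjk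
    have h2 := trinom (s := j) (k := k) (2 * j) hjk
    rw [show 2 * j - j = j by omega] at h2
    have h3 : (n + k).choose k = (n + k).choose n := by
      rw [← Nat.choose_symm (Nat.le_add_left k n)]
      congr 1
      omega
    calc n.choose k * (n + k).choose k * (k.choose j ^ 2 * (2 * j).choose k)
        = (n.choose k * k.choose j) * ((2 * j).choose k * k.choose j) * (n + k).choose k := by
          ring
      _ = (n.choose j * (n - j).choose (k - j)) * ((2 * j).choose j * j.choose (k - j))
            * (n + k).choose n := by rw [h1, h2, h3]
      _ = n.choose j * (2 * j).choose j *
            ((n - j).choose (k - j) * (j.choose (k - j) * (n + k).choose n)) := by ring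
  rw [Finset.sum_congr rfl point, ← Finset.mul_sum, Finset.sum_Ico_eq_sum_range,
    show n + 1 - j = (n - j) + 1 by omega]
  have inner : ∑ i ∈ range ((n - j) + 1),
      (n - j).choose (j + i - j) * (j.choose (j + i - j) * (n + (j + i)).choose n)
        = (n + j).choose (n - j) * (n + j).choose j := by
    have hs := suranyi (n - j) j (n + j)
    rw [show (n - j) + j = n by omega] at hs
    rw [← hs]
    refine Finset.sum_congr rfl fun i _ => ?_
    rw [Nat.add_sub_cancel_left, show n + (j + i) = n + j + i by ring]
    ring
  rw [inner]
  have h4 : (n + j).choose (n - j) = (n + j).choose (2 * j) := by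
    rw [← Nat.choose_symm (show n - j ≤ n + j by omega)]
    congr 1
    omega
  have h5 := trinom (s := j) (k := 2 * j) (n + j) (by omega)
  rw [show n + j - j = n by omega, show 2 * j - j = j by omega] at h5
  rw [h4, show n.choose j * (2 * j).choose j * ((n + j).choose (2 * j) * (n + j).choose j)
      = ((n + j).choose (2 * j) * (2 * j).choose j) * (n.choose j * (n + j).choose j) from by
        ring, h5]
  ring
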